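/- For the modified stick-breaking process with parameters $\tilde\nu \in (0,1]$ and $\theta^* > 0$, and for any positive integer $n_2$: $\mathbb{E}\left[X_2^{n_2}(1 - \tilde\nu X_1)\right] = \left\{\theta^* + (n_2+1)(1-\tilde\nu)\right\} \frac{\tilde\nu\, n_2!\, \Gamma(\theta^*+1)}{\Gamma(\theta^* + n_2 + 2)}$. -/

import Mathlib

open MeasureTheory ProbabilityTheory
open scoped BigOperators ENNReal

/-- `sbEta ν U B n` is the remaining-stick variable `η_n` of the modified stick-breaking
process: `η_0 = 1`, `η_n = η_{n-1}(1 - D_n)` with `D_n = ξ_n B_n` and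
`ξ_n = 1{U_n ≤ ν η_{n-1}/(1-ν+ν η_{n-1})}` (here `U (n-1), B (n-1)` play the role of
the paper's `U_n, B_n`). -/
noncomputable def sbEta (ν : ℝ) {Ω : Type*} (U B : ℕ → Ω → ℝ) : ℕ → Ω → ℝ
  | 0 => fun _ => 1
  | n + 1 => fun ω =>
      sbEta ν U B n ω *
        (1 - if U n ω ≤ ν * sbEta ν U B n ω / (1 - ν + ν * sbEta ν U B n ω)
             then B n ω else 0)

/-- `sbX ν U B n = X_{n+1} = η_n D_{n+1}` of the modified stick-breaking process. -/
noncomputable def sbX (ν : ℝ) {Ω : Type*} (U B : ℕ → Ω → ℝ) (n : ℕ) (ω : Ω) : ℝ :=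
  sbEta ν U B n ω *
    (if U n ω ≤ ν * sbEta ν U B n ω / (1 - ν + ν * sbEta ν U B n ω)
     then B n ω else 0)

open intervalIntegral Set

section SBAux

lemma sb_real_beta_nat (a : ℕ) {c : ℝ} (hc : 0 < c) :
    ∫ x in (0:ℝ)..1, x ^ a * (1 - x) ^ (c - 1) =
      (a.factorial : ℝ) * Real.Gamma c / Real.Gamma (c + a + 1) := by
  have hs : 0 < Complex.re ((a : ℂ) + 1) := by simp; positivity
  have ht : 0 < Complex.re ((c : ℝ) : ℂ) := by simpa using hc
  have h := Complex.Gamma_mul_Gamma_eq_betaIntegral hs ht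
  have hbeta : Complex.betaIntegral ((a : ℂ) + 1) ((c : ℝ) : ℂ)
      = ((∫ x in (0:ℝ)..1, x ^ a * (1 - x) ^ (c - 1) : ℝ) : ℂ) := by
    rw [Complex.betaIntegral, ← intervalIntegral.integral_ofReal]
    refine intervalIntegral.integral_congr fun x hx => ?_
    rw [Set.uIcc_of_le (by norm_num : (0:ℝ) ≤ 1)] at hx
    have hx0 : (0:ℝ) ≤ x := hx.1
    have hx1 : x ≤ 1 := hx.2
    have h1 : ((a : ℂ) + 1) - 1 = ((a : ℕ) : ℂ) := by ring
    have h2 : ((c : ℝ) : ℂ) - 1 = (((c - 1 : ℝ)) : ℂ) := by push_cast; ring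
    rw [h1, h2, Complex.cpow_natCast]
    rw [show (1 : ℂ) - (x : ℝ) = (((1 - x : ℝ)) : ℂ) by push_cast; ring]
    rw [← Complex.ofReal_cpow (by linarith)]
    push_cast
    ring
  rw [hbeta] at h
  have hG1 : Complex.Gamma ((a : ℂ) + 1) = ((a.factorial : ℝ) : ℂ) := by
    rw [show ((a : ℂ) + 1) = ((a : ℕ) + 1 : ℂ) by push_cast; ring]
    rw [Complex.Gamma_nat_eq_factorial]
    push_cast; ring
  have hG2 : Complex.Gamma (((c : ℝ)) : ℂ) = ((Real.Gamma c : ℝ) : ℂ) :=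
    Complex.Gamma_ofReal c
  have hG3 : Complex.Gamma ((a : ℂ) + 1 + ((c:ℝ) : ℂ)) = ((Real.Gamma (c + a + 1) : ℝ) : ℂ) := by
    rw [show ((a : ℂ) + 1 + ((c:ℝ) : ℂ)) = (((c + a + 1 : ℝ)) : ℂ) by push_cast; ring]
    exact Complex.Gamma_ofReal _
  rw [hG1, hG2, hG3] at h
  have hGpos : 0 < Real.Gamma (c + a + 1) := Real.Gamma_pos_of_pos (by positivity)
  have h' : (a.factorial : ℝ) * Real.Gamma c
      = Real.Gamma (c + a + 1) * ∫ x in (0:ℝ)..1, x ^ a * (1 - x) ^ (c - 1) := by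
    exact_mod_cast h
  field_simp
  linarith [h']

lemma sb_gii {θ : ℝ} (hθ : 0 < θ) (x : ℝ) :
    IntervalIntegrable (fun t => θ * (1 - t) ^ (θ - 1)) MeasureTheory.volume 0 x := by
  have h : IntervalIntegrable (fun s : ℝ => s ^ (θ - 1)) MeasureTheory.volume (1 - 0) (1 - x) :=
    intervalIntegral.intervalIntegrable_rpow' (by linarith)
  have h2 := (h.comp_sub_left 1)
  simp only [sub_sub_cancel] at h2
  exact h2.const_mul θ

lemma sb_gcdf {θ : ℝ} (hθ : 0 < θ) (x : ℝ) :
    ∫ t in (0:ℝ)..x, θ * (1 - t) ^ (θ - 1) = 1 - (1 - x) ^ θ := by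
  rw [intervalIntegral.integral_const_mul]
  rw [intervalIntegral.integral_comp_sub_left (fun s : ℝ => s ^ (θ - 1)) 1]
  rw [integral_rpow (Or.inl (by linarith))]
  rw [sub_add_cancel]
  norm_num [Real.one_rpow]
  field_simp

lemma sb_law_B {Ω : Type*} [MeasurableSpace Ω] (μ : Measure Ω) [IsProbabilityMeasure μ]
    {θ : ℝ} (hθ : 0 < θ) (b : Ω → ℝ) (hb : Measurable b)
    (hbr : ∀ ω, b ω ∈ Set.Icc (0:ℝ) 1)
    (hbd : ∀ x ∈ Set.Icc (0:ℝ) 1, μ {ω | b ω ≤ x} = ENNReal.ofReal (1 - (1-x)^θ)) :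
    μ.map b = (volume.restrict (Set.Ioo (0:ℝ) 1)).withDensity
      (fun x => ENNReal.ofReal (θ * (1-x)^(θ-1))) := by
  have hmap : IsProbabilityMeasure (μ.map b) := Measure.isProbabilityMeasure_map hb.aemeasurable
  set g : ℝ → ℝ := fun t => θ * (1-t)^(θ-1) with hg
  -- key computation of the density measure of Ioo 0 x
  have key : ∀ x : ℝ, 0 ≤ x → x ≤ 1 →
      ∫⁻ t in Set.Ioo 0 x, ENNReal.ofReal (g t) = ENNReal.ofReal (1 - (1-x)^θ) := by
    intro x h0 h1
    have hint : IntegrableOn g (Set.Ioo 0 x) := by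
      have := (sb_gii hθ x)
      rw [intervalIntegrable_iff_integrableOn_Ioc_of_le h0] at this
      exact this.mono_set Set.Ioo_subset_Ioc_self
    have hnn : 0 ≤ᵐ[volume.restrict (Set.Ioo 0 x)] g := by
      filter_upwards [ae_restrict_mem measurableSet_Ioo] with t ht
      have : (0:ℝ) ≤ 1 - t := by linarith [ht.2]
      exact mul_nonneg hθ.le (Real.rpow_nonneg this _)
    rw [← ofReal_integral_eq_lintegral_ofReal hint hnn]
    congr 1
    rw [← MeasureTheory.integral_Ioc_eq_integral_Ioo,
      ← intervalIntegral.integral_of_le h0]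
    exact sb_gcdf hθ x
  refine Measure.ext_of_Iic _ _ (fun a => ?_)
  rw [Measure.map_apply hb measurableSet_Iic,
    withDensity_apply _ measurableSet_Iic, Measure.restrict_restrict measurableSet_Iic]
  rcases lt_or_ge a 0 with ha | ha
  · have h1 : b ⁻¹' Set.Iic a = ∅ := by
      ext ω; simp only [Set.mem_preimage, Set.mem_Iic, Set.mem_empty_iff_false, iff_false]
      intro h; linarith [(hbr ω).1]
    have h2 : Set.Iic a ∩ Set.Ioo (0:ℝ) 1 = ∅ := by
      ext t; simp only [Set.mem_inter_iff, Set.mem_Iic, Set.mem_Ioo,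
        Set.mem_empty_iff_false, iff_false]
      rintro ⟨ht, ht0, -⟩; linarith
    simp [h1, h2]
  rcases le_or_gt a 1 with ha1 | ha1
  · have hae : (Set.Iic a ∩ Set.Ioo (0:ℝ) 1 : Set ℝ) =ᵐ[volume] Set.Ioo (0:ℝ) a := by
      have hne : ∀ᵐ t : ℝ ∂volume, t ≠ a := by
        rw [ae_iff]; simp
      rw [Filter.eventuallyEq_set]
      filter_upwards [hne] with t ht
      simp only [Set.mem_inter_iff, Set.mem_Iic, Set.mem_Ioo]
      constructor
      · rintro ⟨h1, h2, h3⟩; exact ⟨h2, lt_of_le_of_ne h1 ht⟩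
      · rintro ⟨h1, h2⟩; exact ⟨h2.le, h1, lt_of_lt_of_le h2 ha1⟩
    rw [Measure.restrict_congr_set hae, key a ha ha1]
    have : b ⁻¹' Set.Iic a = {ω | b ω ≤ a} := rfl
    rw [this, hbd a ⟨ha, ha1⟩]
  · have h2 : Set.Iic a ∩ Set.Ioo (0:ℝ) 1 = Set.Ioo (0:ℝ) 1 := by
      ext t; simp only [Set.mem_inter_iff, Set.mem_Iic, Set.mem_Ioo]
      exact ⟨fun h => h.2, fun h => ⟨(h.2.trans ha1).le, h⟩⟩
    have h1 : b ⁻¹' Set.Iic a = Set.univ := by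
      ext ω; simp only [Set.mem_preimage, Set.mem_Iic, Set.mem_univ, iff_true]
      exact (hbr ω).2.trans ha1.le
    rw [h1, h2, key 1 zero_le_one le_rfl]
    simp [Real.zero_rpow hθ.ne']

lemma sb_integral_B {Ω : Type*} [MeasurableSpace Ω] (μ : Measure Ω) [IsProbabilityMeasure μ]
    {θ : ℝ} (hθ : 0 < θ) (b : Ω → ℝ) (hb : Measurable b)
    (hbr : ∀ ω, b ω ∈ Set.Icc (0:ℝ) 1)
    (hbd : ∀ x ∈ Set.Icc (0:ℝ) 1, μ {ω | b ω ≤ x} = ENNReal.ofReal (1 - (1-x)^θ))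
    (h : ℝ → ℝ) (hh : Measurable h) :
    ∫ ω, h (b ω) ∂μ = ∫ x in (0:ℝ)..1, θ * (1-x)^(θ-1) * h x := by
  rw [← MeasureTheory.integral_map hb.aemeasurable hh.aestronglyMeasurable,
    sb_law_B μ hθ b hb hbr hbd]
  have hd : (fun x : ℝ => ENNReal.ofReal (θ * (1-x)^(θ-1)))
      = fun x : ℝ => ((fun y : ℝ => (θ * (1-y)^(θ-1)).toNNReal) x : ℝ≥0∞) := rfl
  rw [hd, integral_withDensity_eq_integral_smul]
  · rw [intervalIntegral.integral_of_le zero_le_one, MeasureTheory.integral_Ioc_eq_integral_Ioo]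
    refine setIntegral_congr_fun measurableSet_Ioo (fun x hx => ?_)
    have hnn : (0:ℝ) ≤ θ * (1-x)^(θ-1) :=
      mul_nonneg hθ.le (Real.rpow_nonneg (by linarith [hx.2]) _)
    simp [NNReal.smul_def, Real.coe_toNNReal _ hnn]
  · fun_prop

lemma sb_moment1 {Ω : Type*} [MeasurableSpace Ω] (μ : Measure Ω) [IsProbabilityMeasure μ]
    {θ : ℝ} (hθ : 0 < θ) (b : Ω → ℝ) (hb : Measurable b)
    (hbr : ∀ ω, b ω ∈ Set.Icc (0:ℝ) 1)
    (hbd : ∀ x ∈ Set.Icc (0:ℝ) 1, μ {ω | b ω ≤ x} = ENNReal.ofReal (1 - (1-x)^θ))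
    (k : ℕ) :
    ∫ ω, (b ω) ^ k ∂μ = (k.factorial : ℝ) * Real.Gamma (θ+1) / Real.Gamma (θ+k+1) := by
  rw [sb_integral_B μ hθ b hb hbr hbd (fun x => x ^ k) (by fun_prop)]
  have : ∀ x : ℝ, θ * (1-x)^(θ-1) * x^k = θ * (x^k * (1-x)^(θ-1)) := fun x => by ring
  simp_rw [this]
  rw [intervalIntegral.integral_const_mul, sb_real_beta_nat k hθ,
    Real.Gamma_add_one hθ.ne']
  ring

lemma sb_moment2 {Ω : Type*} [MeasurableSpace Ω] (μ : Measure Ω) [IsProbabilityMeasure μ]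
    {θ : ℝ} (hθ : 0 < θ) (b : Ω → ℝ) (hb : Measurable b)
    (hbr : ∀ ω, b ω ∈ Set.Icc (0:ℝ) 1)
    (hbd : ∀ x ∈ Set.Icc (0:ℝ) 1, μ {ω | b ω ≤ x} = ENNReal.ofReal (1 - (1-x)^θ))
    (m : ℕ) (hm : 1 ≤ m) :
    ∫ ω, (1 - b ω) ^ m ∂μ = θ / (θ + m) := by
  rw [sb_integral_B μ hθ b hb hbr hbd (fun x => (1 - x) ^ m) (by fun_prop)]
  have hcg : ∀ x ∈ Set.uIcc (0:ℝ) 1,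
      θ * (1-x)^(θ-1) * (1-x)^m = θ * ((x:ℝ)^(0:ℕ) * (1-x)^((θ + m) - 1)) := by
    intro x hx
    rw [Set.uIcc_of_le (by norm_num : (0:ℝ) ≤ 1)] at hx
    rcases lt_or_eq_of_le hx.2 with h1 | h1
    · have hpos : (0:ℝ) < 1 - x := by linarith
      rw [mul_assoc, ← Real.rpow_natCast (1-x) m, ← Real.rpow_add hpos,
        show θ - 1 + (m:ℝ) = θ + m - 1 by ring, pow_zero, one_mul]
    · subst h1
      have hm1 : (1:ℝ) ≤ m := by exact_mod_cast hm
      have he : θ + (m:ℝ) - 1 ≠ 0 := by intro h; linarith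
      simp [zero_pow (by omega : m ≠ 0), Real.zero_rpow he]
  rw [intervalIntegral.integral_congr hcg, intervalIntegral.integral_const_mul,
    sb_real_beta_nat 0 (by positivity : (0:ℝ) < θ + m)]
  rw [show θ + (m:ℝ) + ((0:ℕ):ℝ) + 1 = (θ + m) + 1 by push_cast; ring,
    Real.Gamma_add_one (by positivity)]
  have hG : Real.Gamma (θ + m) ≠ 0 := (Real.Gamma_pos_of_pos (by positivity)).ne'
  have hθm : θ + (m:ℝ) ≠ 0 := by positivity
  simp only [Nat.factorial_zero, Nat.cast_one, one_mul]
  field_simp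

noncomputable def sbD (ν u b : ℝ) : ℝ := if u ≤ ν then b else 0
noncomputable def sbPhi (ν t : ℝ) : ℝ := ν * t / (1 - ν + ν * t)
noncomputable def sbInd (c u : ℝ) : ℝ := if u ≤ c then 1 else 0
noncomputable def sbG (ν : ℝ) (n₂ : ℕ) (d u : ℝ) : ℝ :=
  (1 - d) ^ n₂ * sbInd (sbPhi ν (1 - d)) u * (1 - ν * d)

lemma measurable_sbD_comp {α : Type*} [MeasurableSpace α] {g h : α → ℝ}
    (hg : Measurable g) (hh : Measurable h) (ν : ℝ) :
    Measurable (fun a => sbD ν (g a) (h a)) :=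
  Measurable.ite (measurableSet_le hg measurable_const) hh measurable_const

lemma measurable_sbPhi_comp {α : Type*} [MeasurableSpace α] {g : α → ℝ}
    (hg : Measurable g) (ν : ℝ) :
    Measurable (fun a => sbPhi ν (g a)) :=
  (measurable_const.mul hg).div (measurable_const.add (measurable_const.mul hg))

lemma measurable_sbInd_comp {α : Type*} [MeasurableSpace α] {c u : α → ℝ}
    (hc : Measurable c) (hu : Measurable u) :
    Measurable (fun a => sbInd (c a) (u a)) :=
  Measurable.ite (measurableSet_le hu hc) measurable_const measurable_const

lemma measurable_sbG_comp {α : Type*} [MeasurableSpace α] {g h : α → ℝ}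
    (hg : Measurable g) (hh : Measurable h) (ν : ℝ) (n₂ : ℕ) :
    Measurable (fun a => sbG ν n₂ (g a) (h a)) := by
  unfold sbG
  exact (((measurable_const.sub hg).pow_const _).mul
    (measurable_sbInd_comp (measurable_sbPhi_comp (measurable_const.sub hg) ν) hh)).mul
    (measurable_const.sub (measurable_const.mul hg))

lemma sbPhi_mem {ν t : ℝ} (hν0 : 0 < ν) (hν1 : ν ≤ 1) (ht0 : 0 ≤ t) (ht1 : t ≤ 1) :
    sbPhi ν t ∈ Set.Icc (0:ℝ) 1 := by
  unfold sbPhi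
  rcases eq_or_lt_of_le ht0 with h | h
  · simp [← h]
  · have hd : 0 < 1 - ν + ν * t := by nlinarith
    constructor
    · exact div_nonneg (by positivity) hd.le
    · rw [div_le_one hd]; nlinarith

lemma sbPhi_key {ν d : ℝ} (hν0 : 0 < ν) (hν1 : ν ≤ 1) (hd0 : 0 ≤ d) (hd1 : d ≤ 1) :
    (1 - ν * d) * sbPhi ν (1 - d) = ν * (1 - d) := by
  unfold sbPhi
  rw [show 1 - ν + ν * (1 - d) = 1 - ν * d by ring]
  by_cases h : (1:ℝ) - ν * d = 0
  · have hd1' : d = 1 := by nlinarith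
    have hν1' : ν = 1 := by nlinarith
    subst hd1' hν1'
    norm_num
  · field_simp

section indep
variable {Ω : Type*} [MeasurableSpace Ω] (μ : Measure Ω) [IsProbabilityMeasure μ]
  (U B : ℕ → Ω → ℝ)

lemma sb_meas_elim (hU : ∀ n, Measurable (U n)) (hB : ∀ n, Measurable (B n)) :
    ∀ i : ℕ ⊕ ℕ, Measurable (Sum.elim U B i) := by
  rintro (n | n)
  · exact hU n
  · exact hB n

lemma sb_indep_G (ν : ℝ) (n₂ : ℕ)
    (hU : ∀ n, Measurable (U n)) (hB : ∀ n, Measurable (B n))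
    (hindep : iIndepFun (Sum.elim U B) μ) :
    IndepFun (fun ω => sbG ν n₂ (sbD ν (U 0 ω) (B 0 ω)) (U 1 ω))
      (fun ω => (B 1 ω) ^ n₂) μ := by
  classical
  set S : Finset (ℕ ⊕ ℕ) := {Sum.inl 0, Sum.inr 0, Sum.inl 1} with hS
  set T : Finset (ℕ ⊕ ℕ) := {Sum.inr 1} with hT
  have hST : Disjoint S T := by decide
  have hbase := hindep.indepFun_finset S T hST (sb_meas_elim U B hU hB)
  let i₀ : S := ⟨Sum.inl 0, by decide⟩
  let j₀ : S := ⟨Sum.inr 0, by decide⟩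
  let i₁ : S := ⟨Sum.inl 1, by decide⟩
  let k : T := ⟨Sum.inr 1, by decide⟩
  have hΦ : Measurable (fun v : (∀ _ : S, ℝ) => sbG ν n₂ (sbD ν (v i₀) (v j₀)) (v i₁)) :=
    measurable_sbG_comp
      (measurable_sbD_comp (measurable_pi_apply i₀) (measurable_pi_apply j₀) ν)
      (measurable_pi_apply i₁) ν n₂
  have hΨ : Measurable (fun v : (∀ _ : T, ℝ) => (v k) ^ n₂) :=
    (measurable_pi_apply k).pow_const n₂
  exact hbase.comp hΦ hΨ
end indep


lemma sb_integrable_of_bound {Ω : Type*} [MeasurableSpace Ω] (μ : Measure Ω)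
    [IsFiniteMeasure μ] (h : Ω → ℝ) (C : ℝ) (hm : AEStronglyMeasurable h μ)
    (hb : ∀ ω, ‖h ω‖ ≤ C) : Integrable h μ :=
  (integrable_const C).mono' hm (ae_of_all μ hb)

lemma sb_abs_pow_le_one {x : ℝ} (h0 : 0 ≤ x) (h1 : x ≤ 1) (k : ℕ) : |x ^ k| ≤ 1 := by
  rw [abs_of_nonneg (pow_nonneg h0 k)]; exact pow_le_one₀ h0 h1


end SBAux

/-- Moments of `X₂` weighted by `1 - ν X₁`:
`E[X₂^{n₂}(1 - ν X₁)] = {θ* + (n₂+1)(1-ν)} · ν n₂! Γ(θ*+1)/Γ(θ*+n₂+2)`. -/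
theorem sb_moments_X2 {Ω : Type*} [MeasurableSpace Ω] (μ : Measure Ω)
    [IsProbabilityMeasure μ]
    (ν θ : ℝ) (hν0 : 0 < ν) (hν1 : ν ≤ 1) (hθ : 0 < θ)
    (U B : ℕ → Ω → ℝ)
    (hU : ∀ n, Measurable (U n)) (hB : ∀ n, Measurable (B n))
    (hUr : ∀ n ω, U n ω ∈ Set.Icc (0 : ℝ) 1)
    (hBr : ∀ n ω, B n ω ∈ Set.Icc (0 : ℝ) 1)
    (hUd : ∀ n, ∀ x ∈ Set.Icc (0 : ℝ) 1,
      μ {ω | U n ω ≤ x} = ENNReal.ofReal x)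
    (hBd : ∀ n, ∀ x ∈ Set.Icc (0 : ℝ) 1,
      μ {ω | B n ω ≤ x} = ENNReal.ofReal (1 - (1 - x) ^ θ))
    (hindep : iIndepFun (Sum.elim U B) μ)
    (n₂ : ℕ) (hn₂ : 1 ≤ n₂) :
    ∫ ω, (sbX ν U B 1 ω) ^ n₂ * (1 - ν * sbX ν U B 0 ω) ∂μ
      = (θ + ((n₂ : ℝ) + 1) * (1 - ν)) *
          (ν * (n₂.factorial : ℝ) * Real.Gamma (θ + 1) / Real.Gamma (θ + n₂ + 2)) := by
  classical
  set m : ℕ := n₂ + 1 with hm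
  set D : Ω → ℝ := fun ω => sbD ν (U 0 ω) (B 0 ω) with hDdef
  have hDmeas : Measurable D := measurable_sbD_comp (hU 0) (hB 0) ν
  have hDrange : ∀ ω, D ω ∈ Set.Icc (0:ℝ) 1 := by
    intro ω
    show sbD ν (U 0 ω) (B 0 ω) ∈ Set.Icc (0:ℝ) 1
    unfold sbD; split_ifs
    · exact hBr 0 ω
    · exact ⟨le_rfl, zero_le_one⟩
  set G : Ω → ℝ := fun ω => sbG ν n₂ (D ω) (U 1 ω) with hGdef
  have hGmeas : Measurable G := measurable_sbG_comp hDmeas (hU 1) ν n₂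
  have hGbound : ∀ ω, ‖G ω‖ ≤ 1 := by
    intro ω
    obtain ⟨hd0, hd1⟩ := hDrange ω
    show ‖sbG ν n₂ (D ω) (U 1 ω)‖ ≤ 1
    unfold sbG
    rw [Real.norm_eq_abs, abs_mul, abs_mul]
    have hA : |(1 - D ω) ^ n₂| ≤ 1 := sb_abs_pow_le_one (by linarith) (by linarith) n₂
    have hI : |sbInd (sbPhi ν (1 - D ω)) (U 1 ω)| ≤ 1 := by
      unfold sbInd; split_ifs <;> simp
    have hC : |1 - ν * D ω| ≤ 1 := by
      rw [abs_le]
      constructor <;> nlinarith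
    exact mul_le_one₀ (mul_le_one₀ hA (abs_nonneg _) hI) (abs_nonneg _) hC
  -- Step A
  have hX0 : ∀ ω, sbX ν U B 0 ω = D ω := by
    intro ω
    show (1:ℝ) * (if U 0 ω ≤ ν * 1 / (1 - ν + ν * 1) then B 0 ω else 0) = _
    rw [mul_one, sub_add_cancel, div_one, one_mul]
    rfl
  have hcond : ∀ ω, ν * sbEta ν U B 1 ω / (1 - ν + ν * sbEta ν U B 1 ω)
      = sbPhi ν (1 - D ω) := by
    intro ω
    have he : sbEta ν U B 1 ω = 1 - D ω := by
      show (1:ℝ) * (1 - (if U 0 ω ≤ ν * 1 / (1 - ν + ν * 1) then B 0 ω else 0)) = _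
      rw [mul_one, sub_add_cancel, div_one, one_mul]
      rfl
    rw [he]; rfl
  have hX1 : ∀ ω, (sbX ν U B 1 ω) ^ n₂ * (1 - ν * sbX ν U B 0 ω)
      = G ω * (B 1 ω) ^ n₂ := by
    intro ω
    have he : sbEta ν U B 1 ω = 1 - D ω := by
      show (1:ℝ) * (1 - (if U 0 ω ≤ ν * 1 / (1 - ν + ν * 1) then B 0 ω else 0)) = _
      rw [mul_one, sub_add_cancel, div_one, one_mul]
      rfl
    rw [hX0, show sbX ν U B 1 ω
      = sbEta ν U B 1 ω * (if U 1 ω ≤ ν * sbEta ν U B 1 ω /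
          (1 - ν + ν * sbEta ν U B 1 ω) then B 1 ω else 0) from rfl,
      hcond ω, he]
    show _ = ((1 - D ω) ^ n₂ * sbInd (sbPhi ν (1 - D ω)) (U 1 ω) * (1 - ν * D ω))
      * (B 1 ω) ^ n₂
    unfold sbInd
    split_ifs with h
    · rw [mul_pow]; ring
    · simp [zero_pow (show n₂ ≠ 0 by omega)]
  rw [integral_congr_ae (ae_of_all μ hX1)]
  -- Step B
  have hindepG : IndepFun G (fun ω => (B 1 ω) ^ n₂) μ := sb_indep_G μ U B ν n₂ hU hB hindep
  rw [hindepG.integral_fun_mul_eq_mul_integral hGmeas.aestronglyMeasurable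
    ((hB 1).pow_const n₂).aestronglyMeasurable]
  -- Step C
  have hB1mom : ∫ ω, (B 1 ω) ^ n₂ ∂μ
      = (n₂.factorial : ℝ) * Real.Gamma (θ+1) / Real.Gamma (θ+n₂+1) :=
    sb_moment1 μ hθ (B 1) (hB 1) (hBr 1) (hBd 1) n₂
  -- Step D: Fubini
  haveI hPD : IsProbabilityMeasure (μ.map D) := Measure.isProbabilityMeasure_map hDmeas.aemeasurable
  haveI hPU : IsProbabilityMeasure (μ.map (U 1)) :=
    Measure.isProbabilityMeasure_map (hU 1).aemeasurable
  have hpair : Measurable (fun ω => (D ω, U 1 ω)) := hDmeas.prodMk (hU 1)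
  have hindepDU : IndepFun D (U 1) μ := by
    have h1 := hindep.indepFun_prodMk (sb_meas_elim U B hU hB)
      (Sum.inl 0) (Sum.inr 0) (Sum.inl 1) (by simp) (by simp)
    exact h1.comp (measurable_sbD_comp measurable_fst measurable_snd ν) measurable_id
  have hmapeq : μ.map (fun ω => (D ω, U 1 ω)) = (μ.map D).prod (μ.map (U 1)) :=
    (indepFun_iff_map_prod_eq_prod_map_map hDmeas.aemeasurable (hU 1).aemeasurable).mp hindepDU
  have hψmeas : Measurable (fun p : ℝ × ℝ => sbG ν n₂ p.1 p.2) :=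
    measurable_sbG_comp measurable_fst measurable_snd ν n₂
  have hψint : Integrable (fun p : ℝ × ℝ => sbG ν n₂ p.1 p.2)
      ((μ.map D).prod (μ.map (U 1))) := by
    rw [← hmapeq,
      integrable_map_measure hψmeas.aestronglyMeasurable hpair.aemeasurable]
    exact sb_integrable_of_bound μ _ 1 hGmeas.aestronglyMeasurable hGbound
  have hstep : ∫ ω, G ω ∂μ = ∫ d, ∫ u, sbG ν n₂ d u ∂(μ.map (U 1)) ∂(μ.map D) := by
    calc ∫ ω, G ω ∂μ
        = ∫ p, sbG ν n₂ p.1 p.2 ∂(μ.map (fun ω => (D ω, U 1 ω))) :=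
          (integral_map hpair.aemeasurable hψmeas.aestronglyMeasurable).symm
      _ = ∫ p, sbG ν n₂ p.1 p.2 ∂((μ.map D).prod (μ.map (U 1))) := by rw [hmapeq]
      _ = ∫ d, ∫ u, sbG ν n₂ d u ∂(μ.map (U 1)) ∂(μ.map D) := integral_prod _ hψint
  have hinner : ∀ d ∈ Set.Icc (0:ℝ) 1,
      ∫ u, sbG ν n₂ d u ∂(μ.map (U 1)) = ν * (1-d) ^ m := by
    intro d hd
    have hc : sbPhi ν (1-d) ∈ Set.Icc (0:ℝ) 1 :=
      sbPhi_mem hν0 hν1 (by linarith [hd.2]) (by linarith [hd.1])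
    have h1 : (fun u => sbG ν n₂ d u)
        = fun u => ((1-d)^n₂ * (1 - ν*d)) * sbInd (sbPhi ν (1-d)) u := by
      funext u; unfold sbG; ring
    rw [h1, MeasureTheory.integral_const_mul]
    have h2 : (fun u : ℝ => sbInd (sbPhi ν (1-d)) u)
        = Set.indicator (Set.Iic (sbPhi ν (1-d))) (fun _ => (1:ℝ)) := by
      funext u; unfold sbInd; rw [Set.indicator_apply]; simp [Set.mem_Iic]
    rw [h2, integral_indicator_const _ measurableSet_Iic]
    have h3 : (μ.map (U 1)) (Set.Iic (sbPhi ν (1-d))) = ENNReal.ofReal (sbPhi ν (1-d)) := by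
      rw [Measure.map_apply (hU 1) measurableSet_Iic]
      exact hUd 1 _ hc
    rw [measureReal_def, h3, ENNReal.toReal_ofReal hc.1]
    have h4 := sbPhi_key hν0 hν1 hd.1 hd.2
    have h5 : (1-d)^n₂ * (1 - ν*d) * (sbPhi ν (1-d) • (1:ℝ))
        = (1-d)^n₂ * ((1 - ν*d) * sbPhi ν (1-d)) := by
      rw [smul_eq_mul, mul_one]; ring
    rw [h5, h4, hm, pow_succ]; ring
  have hae : ∀ᵐ d ∂(μ.map D), d ∈ Set.Icc (0:ℝ) 1 :=
    (MeasureTheory.ae_map_iff hDmeas.aemeasurable measurableSet_Icc).2 (ae_of_all μ hDrange)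
  have houter : ∫ d, ∫ u, sbG ν n₂ d u ∂(μ.map (U 1)) ∂(μ.map D)
      = ∫ d, ν * (1-d) ^ m ∂(μ.map D) := by
    refine integral_congr_ae ?_
    filter_upwards [hae] with d hd
    exact hinner d hd
  have hback : ∫ d, ν * (1-d) ^ m ∂(μ.map D) = ν * ∫ ω, (1 - D ω) ^ m ∂μ := by
    rw [integral_map hDmeas.aemeasurable
      (by fun_prop : Measurable (fun d : ℝ => ν * (1-d) ^ m)).aestronglyMeasurable,
      MeasureTheory.integral_const_mul]
  -- Step E
  have hBm0 : Integrable (fun ω => (1 - B 0 ω) ^ m) μ := by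
    refine sb_integrable_of_bound μ _ 1
      ((measurable_const.sub (hB 0)).pow_const m).aestronglyMeasurable (fun ω => ?_)
    obtain ⟨hb0, hb1⟩ := hBr 0 ω
    exact sb_abs_pow_le_one (by linarith) (by linarith) m
  have hBint : Integrable (fun ω => sbInd ν (U 0 ω) * ((1 - B 0 ω) ^ m - 1)) μ := by
    refine sb_integrable_of_bound μ _ 1
      ((measurable_sbInd_comp measurable_const (hU 0)).mul
        (((measurable_const.sub (hB 0)).pow_const m).sub measurable_const)).aestronglyMeasurable
      (fun ω => ?_)
    obtain ⟨hb0, hb1⟩ := hBr 0 ω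
    rw [Real.norm_eq_abs, abs_mul]
    have hI : |sbInd ν (U 0 ω)| ≤ 1 := by unfold sbInd; split_ifs <;> simp
    have hP : |(1 - B 0 ω) ^ m - 1| ≤ 1 := by
      have h0 : (0:ℝ) ≤ (1 - B 0 ω) ^ m := pow_nonneg (by linarith) m
      have h1 : (1 - B 0 ω) ^ m ≤ 1 := pow_le_one₀ (by linarith) (by linarith)
      rw [abs_le]; constructor <;> linarith
    exact mul_le_one₀ hI (abs_nonneg _) hP
  have hindepUB : IndepFun (U 0) (B 0) μ :=
    hindep.indepFun (show (Sum.inl 0 : ℕ⊕ℕ) ≠ Sum.inr 0 by simp)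
  have hindepUB2 : IndepFun (fun ω => sbInd ν (U 0 ω)) (fun ω => (1 - B 0 ω) ^ m - 1) μ :=
    hindepUB.comp (measurable_sbInd_comp measurable_const measurable_id)
      (((measurable_const.sub measurable_id).pow_const m).sub measurable_const)
  have hEm : ∫ ω, (1 - D ω) ^ m ∂μ = ν * (θ/(θ+m) - 1) + 1 := by
    have h1 : ∀ ω, (1 - D ω) ^ m = sbInd ν (U 0 ω) * ((1 - B 0 ω) ^ m - 1) + 1 := by
      intro ω
      show (1 - sbD ν (U 0 ω) (B 0 ω)) ^ m = _
      unfold sbD sbInd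
      split_ifs <;> ring
    rw [integral_congr_ae (ae_of_all μ h1),
      integral_add hBint (integrable_const 1),
      hindepUB2.integral_fun_mul_eq_mul_integral
        (measurable_sbInd_comp measurable_const (hU 0)).aestronglyMeasurable
        (((measurable_const.sub (hB 0)).pow_const m).sub measurable_const).aestronglyMeasurable]
    have hU0 : ∫ ω, sbInd ν (U 0 ω) ∂μ = ν := by
      have h2 : (fun ω => sbInd ν (U 0 ω))
          = Set.indicator {ω | U 0 ω ≤ ν} (fun _ => (1:ℝ)) := by
        funext ω; unfold sbInd; rw [Set.indicator_apply]; simp [Set.mem_setOf_eq]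
      rw [h2, integral_indicator_const _ (measurableSet_le (hU 0) measurable_const),
        measureReal_def, hUd 0 ν ⟨hν0.le, hν1⟩, ENNReal.toReal_ofReal hν0.le]
      simp
    have hB0 : ∫ ω, ((1 - B 0 ω) ^ m - 1) ∂μ = θ/(θ+m) - 1 := by
      rw [integral_sub hBm0 (integrable_const 1),
        sb_moment2 μ hθ (B 0) (hB 0) (hBr 0) (hBd 0) m (by omega)]
      simp
    rw [hU0, hB0]
    simp
  -- assemble
  rw [hB1mom, hstep, houter, hback, hEm]
  rw [show θ + (n₂:ℝ) + 2 = (θ + (n₂:ℝ) + 1) + 1 by ring,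
    Real.Gamma_add_one (by positivity : θ + (n₂:ℝ) + 1 ≠ 0)]
  have hGn : Real.Gamma (θ + (n₂:ℝ) + 1) ≠ 0 :=
    (Real.Gamma_pos_of_pos (by positivity)).ne'
  have hden : θ + (n₂:ℝ) + 1 ≠ 0 := by positivity
  have hmcast : ((m:ℕ):ℝ) = (n₂:ℝ) + 1 := by rw [hm]; push_cast; ring
  rw [hmcast]
  have hden2 : θ + ((n₂:ℝ) + 1) ≠ 0 := by positivity
  field_simp
  ring
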